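/- Let H be a real Hilbert space, M ≥ 0 symmetric, −Δ symmetric nonnegative, γ₁, γ₂ ≥ 0, g, h' ∈ H with (h', M h') > 0, rⁿ, rⁿ⁺¹ ∈ ℝ. Set μ̂ = −2γ₁Δφ^{n+1/2} + 2γ₂φ^{n+1/2} + r^{n+1/2} g, L = (h', M μ̂)/(h', M h'), and μ̃ = μ̂ − L h'. If φⁿ⁺¹ − φⁿ = −Δt M μ̃ and rⁿ⁺¹ − rⁿ = (g/2, φⁿ⁺¹ − φⁿ), then Fⁿ⁺¹ − Fⁿ = −Δt (μ̃, M μ̃) ≤ 0, where Fⁿ := γ₁‖∇φⁿ‖² + γ₂‖φⁿ‖² + (rⁿ)². -/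

import Mathlib

open RealInnerProductSpace

/-- Energy dissipation of the SAV scheme for the Allen–Cahn equation with a
Lagrange multiplier enforcing volume conservation. -/
theorem sav_lagrange_allen_cahn_energy_dissipation
    {H H₂ : Type*} [NormedAddCommGroup H] [InnerProductSpace ℝ H]
    [NormedAddCommGroup H₂] [InnerProductSpace ℝ H₂] [CompleteSpace H]
    (M : H →ₗ[ℝ] H) (hMsymm : ∀ x y : H, ⟪M x, y⟫ = ⟪x, M y⟫)
    (hMnonneg : ∀ x : H, 0 ≤ ⟪M x, x⟫)
    (G : H →ₗ[ℝ] H₂) (Lap : H →ₗ[ℝ] H)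
    (hLap : ∀ x y : H, ⟪-Lap x, y⟫ = ⟪G x, G y⟫)
    (γ₁ γ₂ : ℝ) (hγ₁ : 0 ≤ γ₁) (hγ₂ : 0 ≤ γ₂)
    (g h' : H) (hh' : 0 < ⟪h', M h'⟫)
    (rn rn1 : ℝ) (φn φn1 μhat μtilde : H) (L : ℝ)
    (Δt : ℝ) (hΔt : 0 ≤ Δt)
    (hμ : μhat = (-(2 * γ₁)) • Lap (((1:ℝ)/2) • (φn1 + φn))
        + (2 * γ₂) • (((1:ℝ)/2) • (φn1 + φn))
        + ((rn1 + rn) / 2) • g)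
    (hL : L = ⟪h', M μhat⟫ / ⟪h', M h'⟫)
    (hμt : μtilde = μhat - L • h')
    (hφ : φn1 - φn = -Δt • M μtilde)
    (hr : rn1 - rn = ⟪((1:ℝ)/2) • g, φn1 - φn⟫) :
    (γ₁ * ‖G φn1‖ ^ 2 + γ₂ * ‖φn1‖ ^ 2 + rn1 ^ 2)
      - (γ₁ * ‖G φn‖ ^ 2 + γ₂ * ‖φn‖ ^ 2 + rn ^ 2)
      = -Δt * ⟪μtilde, M μtilde⟫
    ∧ -Δt * ⟪μtilde, M μtilde⟫ ≤ 0 := by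
  have hM0 : ⟪h', M μtilde⟫ = 0 := by
    have hne : ⟪h', M h'⟫ ≠ 0 := ne_of_gt hh'
    rw [hμt, map_sub, map_smul, inner_sub_right, real_inner_smul_right, hL]
    field_simp
    ring
  have hGd : ⟪G (φn1 + φn), G (φn1 - φn)⟫ = ‖G φn1‖ ^ 2 - ‖G φn‖ ^ 2 := by
    rw [map_add, map_sub, inner_add_left, inner_sub_right, inner_sub_right,
      real_inner_self_eq_norm_sq, real_inner_self_eq_norm_sq,
      real_inner_comm (G φn) (G φn1)]
    ring
  have hd : ⟪φn1 + φn, φn1 - φn⟫ = ‖φn1‖ ^ 2 - ‖φn‖ ^ 2 := by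
    rw [inner_add_left, inner_sub_right, inner_sub_right,
      real_inner_self_eq_norm_sq, real_inner_self_eq_norm_sq,
      real_inner_comm φn φn1]
    ring
  have hLap' : ⟪Lap (((1:ℝ)/2) • (φn1 + φn)), φn1 - φn⟫
      = -(((1:ℝ)/2) * ⟪G (φn1 + φn), G (φn1 - φn)⟫) := by
    have h1 := hLap (((1:ℝ)/2) • (φn1 + φn)) (φn1 - φn)
    simp only [inner_neg_left, map_smul, real_inner_smul_left] at h1
    simp only [map_smul, real_inner_smul_left]
    linarith
  have hA : ⟪μhat, φn1 - φn⟫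
      = (γ₁ * ‖G φn1‖ ^ 2 + γ₂ * ‖φn1‖ ^ 2 + rn1 ^ 2)
        - (γ₁ * ‖G φn‖ ^ 2 + γ₂ * ‖φn‖ ^ 2 + rn ^ 2) := by
    have hrg : ⟪g, φn1 - φn⟫ = 2 * (rn1 - rn) := by
      rw [hr, real_inner_smul_left]; ring
    rw [hμ, inner_add_left, inner_add_left, real_inner_smul_left,
      real_inner_smul_left, real_inner_smul_left, hLap', hGd,
      real_inner_smul_left, hd, hrg]
    ring
  have hμd : ⟪μtilde, M μtilde⟫ = ⟪h', M μtilde⟫ * 0 + ⟪μtilde, M μtilde⟫ := by ring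
  have hAd : ⟪μhat, φn1 - φn⟫ = -Δt * ⟪μtilde, M μtilde⟫ := by
    have hμhat : μhat = μtilde + L • h' := by rw [hμt]; abel
    rw [hμhat, inner_add_left, hφ, real_inner_smul_right, real_inner_smul_right,
      real_inner_smul_left, hM0]
    ring
  refine ⟨by rw [← hAd, hA], ?_⟩
  have h1 : 0 ≤ ⟪μtilde, M μtilde⟫ := by
    rw [real_inner_comm]; exact hMnonneg μtilde
  nlinarith
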